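/- Consider N jobs with positive processing times p_1,…,p_N, m uniform machines with positive speeds V_1,…,V_m, and an integer n ≤ N. For an n-element subset S of jobs, let OPT(S) denote the minimum of Σ_{j∈S} C_j over all schedules of the jobs of S on the m machines. Then OPT(S) ≤ OPT(S*) for every n-element subset S, where S* is the set of the n jobs with the largest processing times; that is, in the adversarial bilevel problem Q|ADV-n|Σ_j C_j^F, the leader maximizes the follower's optimal total completion time by selecting the n jobs with the largest processing times (and the follower's optimum on that set is achieved by a schedule pairing the k-th largest processing time with the k-th smallest positional weight). -/

import Mathlib

/-- A schedule of a finite set of jobs `J` on `m` uniform machines: each job gets a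
machine and a (1-based) position, positions on each machine are pairwise distinct and
the occupied positions on each machine are exactly `1, …, η_i`. -/
structure Schedule (J : Type) (m : ℕ) where
  mach : J → Fin m
  pos : J → ℕ
  pos_pos : ∀ j, 1 ≤ pos j
  inj : ∀ j j', mach j = mach j' → pos j = pos j' → j = j'
  contiguous : ∀ j, 2 ≤ pos j → ∃ j', mach j' = mach j ∧ pos j' = pos j - 1

namespace Schedule

variable {J : Type} {m : ℕ} [Fintype J]

/-- Number `η_i` of jobs scheduled on machine `i`. -/
def load (σ : Schedule J m) (i : Fin m) : ℕ :=
  (Finset.univ.filter fun j => σ.mach j = i).card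

/-- Completion time of job `j`: jobs on a machine of speed `V i` are processed
consecutively from time 0 without idle time. -/
noncomputable def compl (σ : Schedule J m) (p : J → ℝ) (V : Fin m → ℝ) (j : J) : ℝ :=
  (∑ j' ∈ Finset.univ.filter
      (fun j' => σ.mach j' = σ.mach j ∧ σ.pos j' ≤ σ.pos j), p j') / V (σ.mach j)

/-- Total completion time `Σ_j C_j` of a schedule. -/
noncomputable def totalC (σ : Schedule J m) (p : J → ℝ) (V : Fin m → ℝ) : ℝ :=
  ∑ j, σ.compl p V j

/-- Positional weight of job `j`: `(η_i + 1 - k)/V_i` where `k` is the position of `j`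
on its machine `M_i`, which holds `η_i` jobs. -/
noncomputable def pw (σ : Schedule J m) (V : Fin m → ℝ) (j : J) : ℝ :=
  ((σ.load (σ.mach j) : ℝ) + 1 - (σ.pos j : ℝ)) / V (σ.mach j)

end Schedule

namespace Schedule

variable {J K : Type} {m : ℕ} [Fintype J] [Fintype K]

lemma pos_image_eq (σ : Schedule J m) (i : Fin m) :
    (Finset.univ.filter fun j => σ.mach j = i).image σ.pos = Finset.Icc 1 (σ.load i) := by
  set T := Finset.univ.filter fun j => σ.mach j = i with hT
  have hmem : ∀ j, j ∈ T ↔ σ.mach j = i := by intro j; simp [hT]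
  have hinj : Set.InjOn σ.pos T := by
    intro a ha b hb h
    exact σ.inj a b (((hmem a).1 ha).trans ((hmem b).1 hb).symm) h
  have hcard : (T.image σ.pos).card = σ.load i := Finset.card_image_of_injOn hinj
  have hdown : ∀ k : ℕ, ∀ j, j ∈ T → σ.pos j = k → Finset.Icc 1 k ⊆ T.image σ.pos := by
    intro k
    induction k using Nat.strong_induction_on with
    | _ k ih =>
      intro j hj hjk l hl
      simp only [Finset.mem_Icc] at hl
      rcases eq_or_lt_of_le hl.2 with h | h
      · exact Finset.mem_image.2 ⟨j, hj, by omega⟩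
      · have hk2 : 2 ≤ σ.pos j := by have := σ.pos_pos j; omega
        obtain ⟨j', hmj, hpj⟩ := σ.contiguous j hk2
        have hj' : j' ∈ T := (hmem j').2 (hmj.trans ((hmem j).1 hj))
        exact ih (k - 1) (by omega) j' hj' (by omega) (Finset.mem_Icc.2 ⟨hl.1, by omega⟩)
  rcases T.eq_empty_or_nonempty with h | h
  · have : σ.load i = 0 := by rw [← hcard, h]; simp
    rw [h, this]; simp
  · have hne : (T.image σ.pos).Nonempty := h.image _
    obtain ⟨j, hj, hjM⟩ := Finset.mem_image.1 (Finset.max'_mem _ hne)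
    set M := (T.image σ.pos).max' hne with hMdef
    have hsub1 : T.image σ.pos ⊆ Finset.Icc 1 M := by
      intro a ha
      obtain ⟨b, hb, rfl⟩ := Finset.mem_image.1 ha
      exact Finset.mem_Icc.2 ⟨σ.pos_pos b, Finset.le_max' _ _ ha⟩
    have heq : T.image σ.pos = Finset.Icc 1 M :=
      Finset.Subset.antisymm hsub1 (hdown _ j hj hjM)
    have h2 : σ.load i = (Finset.Icc 1 M).card := by rw [← hcard, heq]
    rw [Nat.card_Icc] at h2
    have h3 : 1 ≤ M := hjM ▸ σ.pos_pos j
    have hLM : σ.load i = M := by omega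
    rw [heq, hLM]

lemma pos_le_load (σ : Schedule J m) (j : J) : σ.pos j ≤ σ.load (σ.mach j) := by
  have h := pos_image_eq σ (σ.mach j)
  have hj : σ.pos j ∈ (Finset.univ.filter fun j' => σ.mach j' = σ.mach j).image σ.pos :=
    Finset.mem_image.2 ⟨j, by simp, rfl⟩
  rw [h] at hj
  exact (Finset.mem_Icc.1 hj).2

lemma card_count (σ : Schedule J m) (j0 : J) :
    (Finset.univ.filter fun j => σ.mach j0 = σ.mach j ∧ σ.pos j0 ≤ σ.pos j).card
      = σ.load (σ.mach j0) + 1 - σ.pos j0 := by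
  set T := Finset.univ.filter fun j => σ.mach j = σ.mach j0 with hT
  have h1 : (Finset.univ.filter fun j => σ.mach j0 = σ.mach j ∧ σ.pos j0 ≤ σ.pos j)
      = T.filter fun j => σ.pos j0 ≤ σ.pos j := by
    rw [hT, Finset.filter_filter]
    congr 1; ext j; constructor
    · rintro ⟨h, h'⟩; exact ⟨h.symm, h'⟩
    · rintro ⟨h, h'⟩; exact ⟨h.symm, h'⟩
  have hinj : Set.InjOn σ.pos T := by
    intro a ha b hb h
    simp only [hT, Finset.mem_coe, Finset.mem_filter] at ha hb
    exact σ.inj a b (ha.2.trans hb.2.symm) h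
  have hinj2 : Set.InjOn σ.pos (T.filter fun j => σ.pos j0 ≤ σ.pos j) :=
    hinj.mono (by intro x hx; simp only [Finset.mem_coe, Finset.mem_filter] at hx ⊢; exact hx.1)
  rw [h1, ← Finset.card_image_of_injOn hinj2, ← Finset.filter_image]
  have hTim : T.image σ.pos = Finset.Icc 1 (σ.load (σ.mach j0)) := pos_image_eq σ (σ.mach j0)
  rw [hTim]
  have : (Finset.Icc 1 (σ.load (σ.mach j0))).filter (fun a => σ.pos j0 ≤ a)
      = Finset.Icc (σ.pos j0) (σ.load (σ.mach j0)) := by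
    ext a; simp only [Finset.mem_filter, Finset.mem_Icc]
    have := σ.pos_pos j0
    omega
  rw [this, Nat.card_Icc]

lemma totalC_eq_sum_pw (σ : Schedule J m) (p : J → ℝ) (V : Fin m → ℝ) :
    σ.totalC p V = ∑ j, σ.pw V j * p j := by
  unfold totalC compl pw
  have step1 : ∀ j : J, (∑ j' ∈ Finset.univ.filter
      (fun j' => σ.mach j' = σ.mach j ∧ σ.pos j' ≤ σ.pos j), p j') / V (σ.mach j)
      = ∑ j' : J, if σ.mach j' = σ.mach j ∧ σ.pos j' ≤ σ.pos j then p j' / V (σ.mach j') else 0 := by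
    intro j
    rw [Finset.sum_div, Finset.sum_filter]
    refine Finset.sum_congr rfl fun j' _ => ?_
    split_ifs with h
    · rw [h.1]
    · rfl
  calc ∑ j, (∑ j' ∈ Finset.univ.filter
      (fun j' => σ.mach j' = σ.mach j ∧ σ.pos j' ≤ σ.pos j), p j') / V (σ.mach j)
      = ∑ j, ∑ j' : J, if σ.mach j' = σ.mach j ∧ σ.pos j' ≤ σ.pos j
          then p j' / V (σ.mach j') else 0 := Finset.sum_congr rfl fun j _ => step1 j
    _ = ∑ j' : J, ∑ j : J, if σ.mach j' = σ.mach j ∧ σ.pos j' ≤ σ.pos j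
          then p j' / V (σ.mach j') else 0 := Finset.sum_comm
    _ = ∑ j' : J, ((σ.load (σ.mach j') : ℝ) + 1 - (σ.pos j' : ℝ)) / V (σ.mach j') * p j' := by
        refine Finset.sum_congr rfl fun j' _ => ?_
        rw [← Finset.sum_filter, Finset.sum_const, nsmul_eq_mul, card_count]
        have h1 := pos_le_load σ j'
        have h2 := σ.pos_pos j'
        rw [Nat.cast_sub (by omega)]
        push_cast
        ring
    _ = _ := rfl

def reindex (σ : Schedule K m) (f : J ≃ K) : Schedule J m where
  mach := fun j => σ.mach (f j)
  pos := fun j => σ.pos (f j)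
  pos_pos := fun j => σ.pos_pos (f j)
  inj := fun j j' h1 h2 => f.injective (σ.inj _ _ h1 h2)
  contiguous := fun j h => by
    obtain ⟨k, hk1, hk2⟩ := σ.contiguous (f j) h
    exact ⟨f.symm k, by simpa using hk1, by simpa using hk2⟩

lemma load_reindex (σ : Schedule K m) (f : J ≃ K) (i : Fin m) :
    (σ.reindex f).load i = σ.load i := by
  unfold load
  have hr : (Finset.univ.filter fun j => (σ.reindex f).mach j = i)
      = Finset.univ.filter fun j => σ.mach (f j) = i := rfl
  rw [hr]
  refine Finset.card_bij' (fun j _ => f j) (fun k _ => f.symm k) ?_ ?_ ?_ ?_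
  · intro a ha
    simp only [Finset.mem_filter, Finset.mem_univ, true_and] at ha ⊢
    exact ha
  · intro a ha
    simp only [Finset.mem_filter, Finset.mem_univ, true_and, Equiv.apply_symm_apply] at ha ⊢
    exact ha
  · intro a _
    simp
  · intro a _
    simp

lemma pw_reindex (σ : Schedule K m) (f : J ≃ K) (V : Fin m → ℝ) (j : J) :
    (σ.reindex f).pw V j = σ.pw V (f j) := by
  unfold pw
  rw [load_reindex]
  rfl

lemma pw_nonneg (σ : Schedule J m) (V : Fin m → ℝ) (hV : ∀ i, 0 < V i) (j : J) :
    0 ≤ σ.pw V j := by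
  unfold pw
  apply div_nonneg _ (hV _).le
  have h1 := σ.pos_le_load j
  have h2 : (σ.pos j : ℝ) ≤ (σ.load (σ.mach j) : ℝ) := by exact_mod_cast h1
  linarith

end Schedule

lemma sorted_dominates {N n : ℕ} (p : Fin N → ℝ) (S Sstar : Finset (Fin N))
    (hmax : ∀ u ∈ Sstar, ∀ v ∉ Sstar, p v ≤ p u)
    (eS : Fin n ≃ ↥S) (eT : Fin n ≃ ↥Sstar)
    (haS : ∀ k l : Fin n, k ≤ l → p (eS l).1 ≤ p (eS k).1)
    (haT : ∀ k l : Fin n, k ≤ l → p (eT l).1 ≤ p (eT k).1)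
    (k : Fin n) : p (eS k).1 ≤ p (eT k).1 := by
  classical
  by_contra hlt
  push_neg at hlt
  set t := p (eT k).1 with ht
  set A := S.filter (fun j => t < p j) with hA
  set B := Sstar.filter (fun j => t < p j) with hB
  have hAB : A ⊆ B := by
    intro j hj
    simp only [hA, Finset.mem_filter] at hj
    have hjs : j ∈ Sstar := by
      by_contra hns
      have := hmax (eT k).1 (eT k).2 j hns
      linarith [hj.2]
    exact Finset.mem_filter.2 ⟨hjs, hj.2⟩
  have hAcard : (k : ℕ) + 1 ≤ A.card := by
    have hsub : (Finset.Iic k).image (fun l => ((eS l) : Fin N)) ⊆ A := by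
      intro x hx
      obtain ⟨l, hl, rfl⟩ := Finset.mem_image.1 hx
      refine Finset.mem_filter.2 ⟨(eS l).2, ?_⟩
      have := haS l k (Finset.mem_Iic.1 hl)
      linarith
    have hinj : Set.InjOn (fun l => ((eS l) : Fin N)) (Finset.Iic k) := by
      intro a _ b _ h
      exact eS.injective (Subtype.ext h)
    calc (k : ℕ) + 1 = (Finset.Iic k).card := (Fin.card_Iic k).symm
      _ = ((Finset.Iic k).image (fun l => ((eS l) : Fin N))).card :=
          (Finset.card_image_of_injOn hinj).symm
      _ ≤ A.card := Finset.card_le_card hsub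
  have hBcard : B.card ≤ (k : ℕ) := by
    have hsub : B ⊆ (Finset.Iio k).image (fun l => ((eT l) : Fin N)) := by
      intro u hu
      simp only [hB, Finset.mem_filter] at hu
      set l := eT.symm ⟨u, hu.1⟩ with hl
      have hul : ((eT l) : Fin N) = u := by rw [hl, Equiv.apply_symm_apply]
      have hlk : l < k := by
        by_contra hge
        push_neg at hge
        have := haT k l hge
        rw [hul] at this
        linarith [hu.2]
      exact Finset.mem_image.2 ⟨l, Finset.mem_Iio.2 hlk, hul⟩
    calc B.card ≤ ((Finset.Iio k).image (fun l => ((eT l) : Fin N))).card :=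
          Finset.card_le_card hsub
      _ ≤ (Finset.Iio k).card := Finset.card_image_le
      _ = (k : ℕ) := Fin.card_Iio k
  have := Finset.card_le_card hAB
  omega

/-- (Adversarial bilevel problem `Q|ADV-n|Σ_j C_j^F`.) If `S*` is the
set of the `n` jobs with the largest processing times, then for every `n`-element subset
`S` of jobs, the follower's optimal total completion time on `S` is at most that on
`S*`; moreover the follower's optimum on `S*` is achieved by a schedule pairing the
`k`-th largest processing time with the `k`-th smallest positional weight. -/
theorem adversarial_leader_selects_largest_jobs
    {N m n : ℕ} (p : Fin N → ℝ) (V : Fin m → ℝ)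
    (hp : ∀ j, 0 < p j) (hV : ∀ i, 0 < V i) (hm : 0 < m) (hn : n ≤ N)
    (Sstar S : Finset (Fin N)) (hcardstar : Sstar.card = n) (hcard : S.card = n)
    (hmax : ∀ u ∈ Sstar, ∀ v ∉ Sstar, p v ≤ p u)
    (v v' : ℝ)
    (hv1 : ∃ σ : Schedule (↥S) m, σ.totalC (fun j => p j.1) V = v)
    (hv2 : ∀ σ : Schedule (↥S) m, v ≤ σ.totalC (fun j => p j.1) V)
    (hv'1 : ∃ σ : Schedule (↥Sstar) m, σ.totalC (fun j => p j.1) V = v')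
    (hv'2 : ∀ σ : Schedule (↥Sstar) m, v' ≤ σ.totalC (fun j => p j.1) V) :
    v ≤ v' ∧
    ∃ σ : Schedule (↥Sstar) m, σ.totalC (fun j => p j.1) V = v' ∧
      ∃ e : Fin n ≃ ↥Sstar,
        (∀ k l : Fin n, k ≤ l → p (e l).1 ≤ p (e k).1) ∧
        (∀ k l : Fin n, k ≤ l → σ.pw V (e k) ≤ σ.pw V (e l)) := by
  classical
  obtain ⟨σstar, hσstar⟩ := hv'1
  have hcS : Fintype.card ↥S = n := by rw [Fintype.card_coe, hcard]
  have hcT : Fintype.card ↥Sstar = n := by rw [Fintype.card_coe, hcardstar]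
  set e0S : Fin n ≃ ↥S := (Fintype.equivFinOfCardEq hcS).symm with he0S
  set e0T : Fin n ≃ ↥Sstar := (Fintype.equivFinOfCardEq hcT).symm with he0T
  -- sorted (descending p) enumerations
  set eS : Fin n ≃ ↥S := (Tuple.sort (fun k => -p (e0S k).1)).trans e0S with heSdef
  set eT : Fin n ≃ ↥Sstar := (Tuple.sort (fun k => -p (e0T k).1)).trans e0T with heTdef
  have heS : ∀ k l : Fin n, k ≤ l → p (eS l).1 ≤ p (eS k).1 := by
    intro k l hkl
    have h := Tuple.monotone_sort (fun k => -p (e0S k).1) hkl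
    simp only [Function.comp_apply] at h
    have h3 : p (eS k).1 = p (e0S (Tuple.sort (fun k => -p (e0S k).1) k)).1 := rfl
    show p (e0S (Tuple.sort (fun k => -p (e0S k).1) l)).1 ≤ p (eS k).1
    rw [h3]; linarith
  have heT : ∀ k l : Fin n, k ≤ l → p (eT l).1 ≤ p (eT k).1 := by
    intro k l hkl
    have h := Tuple.monotone_sort (fun k => -p (e0T k).1) hkl
    simp only [Function.comp_apply] at h
    have h3 : p (eT k).1 = p (e0T (Tuple.sort (fun k => -p (e0T k).1) k)).1 := rfl
    show p (e0T (Tuple.sort (fun k => -p (e0T k).1) l)).1 ≤ p (eT k).1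
    rw [h3]; linarith
  -- enumeration of Sstar with ascending positional weight w.r.t. σstar
  set ew : Fin n ≃ ↥Sstar := (Tuple.sort (fun k => σstar.pw V (e0T k))).trans e0T with hewdef
  have hwmono : ∀ k l : Fin n, k ≤ l → σstar.pw V (ew k) ≤ σstar.pw V (ew l) := by
    intro k l hkl
    have h := Tuple.monotone_sort (fun k => σstar.pw V (e0T k)) hkl
    exact h
  -- the rearranged optimal schedule
  set g : ↥Sstar ≃ ↥Sstar := eT.symm.trans ew with hgdef
  set σ' : Schedule (↥Sstar) m := σstar.reindex g with hσ'def
  set a : Fin n → ℝ := fun k => p (eT k).1 with hadef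
  set b : Fin n → ℝ := fun k => σstar.pw V (ew k) with hbdef
  have hgeT : ∀ k, g (eT k) = ew k := by
    intro k; simp [hgdef]
  have hb : ∀ k, σ'.pw V (eT k) = b k := by
    intro k
    rw [hσ'def, Schedule.pw_reindex, hgeT]
  have hσ'total : σ'.totalC (fun j => p j.1) V = ∑ k, b k * a k := by
    rw [Schedule.totalC_eq_sum_pw, ← Equiv.sum_comp eT
      (fun j => σ'.pw V j * p j.1)]
    exact Finset.sum_congr rfl fun k _ => by rw [hb]
  have hσstartotal : σstar.totalC (fun j => p j.1) V = ∑ k, σstar.pw V (eT k) * a k := by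
    rw [Schedule.totalC_eq_sum_pw, ← Equiv.sum_comp eT
      (fun j => σstar.pw V j * p j.1)]
  -- rearrangement inequality
  have hav : Antivary a b := by
    intro i j hbij
    rcases le_total i j with h | h
    · exact heT i j h
    · exact absurd (hwmono j i h) (not_le.2 hbij)
  set π : Equiv.Perm (Fin n) := eT.trans ew.symm with hπdef
  have hbπ : ∀ k, b (π k) = σstar.pw V (eT k) := by
    intro k; simp [hbdef, hπdef]
  have hre : ∑ k, a k * b k ≤ ∑ k, a k * b (π k) :=
    hav.sum_mul_le_sum_mul_comp_perm
  have hle : σ'.totalC (fun j => p j.1) V ≤ v' := by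
    rw [hσ'total, ← hσstar, hσstartotal]
    calc ∑ k, b k * a k = ∑ k, a k * b k := by
          exact Finset.sum_congr rfl fun k _ => mul_comm _ _
      _ ≤ ∑ k, a k * b (π k) := hre
      _ = ∑ k, σstar.pw V (eT k) * a k := by
          exact Finset.sum_congr rfl fun k _ => by rw [hbπ, mul_comm]
  have hσ'eq : σ'.totalC (fun j => p j.1) V = v' := le_antisymm hle (hv'2 σ')
  have hbnn : ∀ k, 0 ≤ b k := by
    intro k
    rw [← hb k]
    exact Schedule.pw_nonneg σ' V hV (eT k)
  -- part 1 : v ≤ v'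
  have hdom : ∀ k, p (eS k).1 ≤ a k := fun k =>
    sorted_dominates p S Sstar hmax eS eT heS heT k
  set f : ↥S ≃ ↥Sstar := eS.symm.trans eT with hfdef
  set σ'' : Schedule (↥S) m := σ'.reindex f with hσ''def
  have hfeS : ∀ k, f (eS k) = eT k := by intro k; simp [hfdef]
  have hσ''total : σ''.totalC (fun j => p j.1) V = ∑ k, b k * p (eS k).1 := by
    rw [Schedule.totalC_eq_sum_pw, ← Equiv.sum_comp eS
      (fun j => σ''.pw V j * p j.1)]
    refine Finset.sum_congr rfl fun k _ => ?_
    rw [hσ''def, Schedule.pw_reindex, hfeS, hb]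
  have hv_le : v ≤ v' := by
    calc v ≤ σ''.totalC (fun j => p j.1) V := hv2 σ''
      _ = ∑ k, b k * p (eS k).1 := hσ''total
      _ ≤ ∑ k, b k * a k := by
          refine Finset.sum_le_sum fun k _ => ?_
          exact mul_le_mul_of_nonneg_left (hdom k) (hbnn k)
      _ = σ'.totalC (fun j => p j.1) V := hσ'total.symm
      _ = v' := hσ'eq
  refine ⟨hv_le, σ', hσ'eq, eT, heT, ?_⟩
  intro k l hkl
  rw [hb k, hb l]
  exact hwmono k l hkl
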